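/- For n > k, the generating function LB_{n,k}(12/3, q) = Σ_{i=1}^{k} q^{(n-k)(k-i)}; in particular its degree is (n-k)(k-1). -/

import Mathlib

open Finset Polynomial

/-- Set partitions of `[n] = {1, …, n}`, modeled as finpartitions of `Fin n`. -/
abbrev SP (n : ℕ) := Finpartition (Finset.univ : Finset (Fin n))

noncomputable instance (n : ℕ) : Fintype (SP n) :=
  Fintype.ofInjective Finpartition.parts fun _ _ h => Finpartition.ext h

/-- `i` and `j` lie in the same block of the set partition `P`. -/
def inSameBlock {n : ℕ} (P : SP n) (i j : Fin n) : Prop :=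
  ∃ B ∈ P.parts, i ∈ B ∧ j ∈ B

/-- `P` avoids the pattern `1/2/3`: no three elements lie in three pairwise distinct blocks. -/
def avoids1_2_3 {n : ℕ} (P : SP n) : Prop :=
  ¬ ∃ a b c : Fin n, a < b ∧ b < c ∧
    ¬ inSameBlock P a b ∧ ¬ inSameBlock P b c ∧ ¬ inSameBlock P a c

/-- `P` avoids the pattern `13/2`. -/
def avoids13_2 {n : ℕ} (P : SP n) : Prop :=
  ¬ ∃ a b c : Fin n, a < b ∧ b < c ∧ inSameBlock P a c ∧ ¬ inSameBlock P a b

/-- `P` avoids the pattern `1/23`. -/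
def avoids1_23 {n : ℕ} (P : SP n) : Prop :=
  ¬ ∃ a b c : Fin n, a < b ∧ b < c ∧ inSameBlock P b c ∧ ¬ inSameBlock P a b

/-- `P` avoids the pattern `12/3`. -/
def avoids12_3 {n : ℕ} (P : SP n) : Prop :=
  ¬ ∃ a b c : Fin n, a < b ∧ b < c ∧ inSameBlock P a b ∧ ¬ inSameBlock P a c

/-- `P` avoids the pattern `123`: every block has at most two elements. -/
def avoids123 {n : ℕ} (P : SP n) : Prop :=
  ∀ B ∈ P.parts, B.card ≤ 2

/-- The block of `P` containing `i`. -/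
def blockOf {n : ℕ} (P : SP n) (i : Fin n) : Finset (Fin n) :=
  (P.parts.filter (fun B => i ∈ B)).sup id

/-- The restricted growth function of `P`: the letter at position `i` is the index
(starting from 1) of the block containing `i`, blocks being ordered by increasing minima. -/
def rgf {n : ℕ} (P : SP n) (i : Fin n) : ℕ :=
  (P.parts.filter (fun B => B.min ≤ (blockOf P i).min)).card

/-- The left-bigger statistic of Wachs and White. -/
def lbStat {n : ℕ} (w : Fin n → ℕ) : ℕ :=
  ∑ j : Fin n, (((Finset.univ.filter (fun i => i < j)).image w).filter (fun v => w j < v)).card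

/-- The left-smaller statistic of Wachs and White. -/
def lsStat {n : ℕ} (w : Fin n → ℕ) : ℕ :=
  ∑ j : Fin n, (((Finset.univ.filter (fun i => i < j)).image w).filter (fun v => v < w j)).card

/-- The right-bigger statistic of Wachs and White. -/
def rbStat {n : ℕ} (w : Fin n → ℕ) : ℕ :=
  ∑ j : Fin n, (((Finset.univ.filter (fun i => j < i)).image w).filter (fun v => w j < v)).card

/-- The right-smaller statistic of Wachs and White. -/
def rsStat {n : ℕ} (w : Fin n → ℕ) : ℕ :=
  ∑ j : Fin n, (((Finset.univ.filter (fun i => j < i)).image w).filter (fun v => v < w j)).card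

open Classical in
/-- The generating function `∑ q^{stat(π)}` over `k`-block partitions of `[n]` avoiding
a given family of patterns (described by the avoidance predicate `avoid`). -/
noncomputable def genPoly (n k : ℕ) (avoid : SP n → Prop) (stat : (Fin n → ℕ) → ℕ) :
    Polynomial ℕ :=
  ∑ P ∈ Finset.univ.filter (fun P : SP n => P.parts.card = k ∧ avoid P),
    Polynomial.X ^ (stat (rgf P))

def bigB (n k a : ℕ) : Finset (Fin n) := univ.filter (fun x => x.val = a ∨ k ≤ x.val)
def smalls (n k a : ℕ) : Finset (Fin n) := univ.filter (fun x => x.val < k ∧ x.val ≠ a)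
lemma mem_bigB {n k a : ℕ} {x : Fin n} : x ∈ bigB n k a ↔ x.val = a ∨ k ≤ x.val := by simp [bigB]
lemma mem_smalls {n k a : ℕ} {x : Fin n} : x ∈ smalls n k a ↔ x.val < k ∧ x.val ≠ a := by simp [smalls]
def partsOf (n k a : ℕ) : Finset (Finset (Fin n)) :=
  insert (bigB n k a) ((smalls n k a).image ({·}))
lemma mem_partsOf {n k a : ℕ} {B : Finset (Fin n)} :
    B ∈ partsOf n k a ↔ B = bigB n k a ∨ ∃ x ∈ smalls n k a, B = {x} := by
  simp [partsOf, eq_comm]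

lemma blockOf_eq {n : ℕ} (P : SP n) {x : Fin n} {B : Finset (Fin n)}
    (hB : B ∈ P.parts) (hx : x ∈ B) : blockOf P x = B := by
  unfold blockOf
  have hf : P.parts.filter (fun C => x ∈ C) = {B} := by
    ext C
    simp only [mem_filter, mem_singleton]
    constructor
    · rintro ⟨hC, hxC⟩; exact P.eq_of_mem_parts hC hB hxC hx
    · rintro rfl; exact ⟨hB, hx⟩
  rw [hf, Finset.sup_singleton, id]

lemma min_eq_of {α : Type*} [LinearOrder α] {s : Finset α} {a : α}
    (ha : a ∈ s) (hmin : ∀ b ∈ s, a ≤ b) : s.min = (a : WithTop α) := by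
  refine le_antisymm (Finset.min_le ha) (Finset.le_min ?_)
  intro b hb; exact_mod_cast hmin b hb

lemma bigB_ne_singleton {n k a : ℕ} (h : k < n) (ha : a < k) (x : Fin n) :
    bigB n k a ≠ {x} := by
  intro hx
  have h1 : (⟨a, ha.trans h⟩ : Fin n) ∈ bigB n k a := mem_bigB.2 (Or.inl rfl)
  have h2 : (⟨k, h⟩ : Fin n) ∈ bigB n k a := mem_bigB.2 (Or.inr le_rfl)
  rw [hx, mem_singleton] at h1 h2
  rw [← h2] at h1
  have := congrArg Fin.val h1
  simp only [Fin.val_mk] at this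
  omega

lemma min_bigB {n k a : ℕ} (h : k < n) (ha : a < k) :
    (bigB n k a).min = ((⟨a, ha.trans h⟩ : Fin n) : WithTop (Fin n)) := by
  refine min_eq_of ?_ ?_
  · exact mem_bigB.2 (Or.inl rfl)
  · intro b hb
    rw [mem_bigB] at hb
    simp only [Fin.le_def, Fin.val_mk]
    omega

lemma count_le {n k a : ℕ} (h : k < n) (ha : a < k) (t : Fin n) (ht : t.val < k) :
    ((partsOf n k a).filter (fun B => B.min ≤ (t : WithTop (Fin n)))).card = t.val + 1 := by
  have hinj : Function.Injective (fun x : Fin n => ({x} : Finset (Fin n))) := by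
    intro x y hxy; simpa using hxy
  rw [partsOf, Finset.filter_insert, Finset.filter_image]
  have hsingle : ∀ x : Fin n, (({x} : Finset (Fin n)).min ≤ (t : WithTop (Fin n))) ↔ x ≤ t := by
    intro x; rw [Finset.min_singleton]; exact WithTop.coe_le_coe
  have himg : ((smalls n k a).filter (fun x => ({x} : Finset (Fin n)).min ≤ (t : WithTop (Fin n)))).image Fin.val
      = (range (t.val+1)).erase a := by
    ext m
    simp only [mem_image, mem_filter, mem_smalls, mem_erase, mem_range]
    constructor
    · rintro ⟨x, ⟨⟨hxk, hxa⟩, hxt⟩, rfl⟩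
      rw [hsingle, Fin.le_def] at hxt
      exact ⟨hxa, by omega⟩
    · rintro ⟨hma, hmt⟩
      refine ⟨⟨m, by omega⟩, ⟨⟨(by omega : m < k), hma⟩, ?_⟩, rfl⟩
      rw [hsingle, Fin.le_def]; show m ≤ t.val; omega
  have hcard : ((smalls n k a).filter (fun x => ({x} : Finset (Fin n)).min ≤ (t : WithTop (Fin n)))).card
      = ((range (t.val+1)).erase a).card := by
    rw [← himg, Finset.card_image_of_injective _ Fin.val_injective]
  rw [min_bigB h ha]
  by_cases hat : a ≤ t.val
  · rw [if_pos (by rw [WithTop.coe_le_coe, Fin.le_def]; simpa using hat)]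
    rw [Finset.card_insert_of_notMem (by
      intro hmem
      obtain ⟨x, _, hx⟩ := Finset.mem_image.1 hmem
      exact bigB_ne_singleton h ha x hx.symm)]
    rw [Finset.card_image_of_injective _ hinj, hcard,
      Finset.card_erase_of_mem (mem_range.2 (by omega)), Finset.card_range]
    omega
  · rw [if_neg (by rw [WithTop.coe_le_coe, Fin.le_def]; simpa using hat)]
    rw [Finset.card_image_of_injective _ hinj, hcard,
      Finset.erase_eq_of_notMem (by rw [mem_range]; omega), Finset.card_range]

def gP (n k a : ℕ) (h : k < n) (ha : a < k) : Finpartition (univ : Finset (Fin n)) where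
  parts := partsOf n k a
  supIndep := by
    rw [Finset.supIndep_iff_pairwiseDisjoint]
    intro B hB C hC hBC
    simp only [Finset.mem_coe, mem_partsOf] at hB hC
    simp only [Function.onFun, id_eq]
    have hdis : ∀ x ∈ smalls n k a, Disjoint (bigB n k a) ({x} : Finset (Fin n)) := by
      intro x hx
      rw [Finset.disjoint_singleton_right, mem_bigB]
      rw [mem_smalls] at hx
      omega
    rcases hB with rfl | ⟨x, hx, rfl⟩ <;> rcases hC with rfl | ⟨y, hy, rfl⟩
    · exact absurd rfl hBC
    · exact hdis y hy
    · exact (hdis x hx).symm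
    · rw [Finset.disjoint_singleton]
      intro hxy; exact hBC (by rw [hxy])
  sup_parts := by
    apply Finset.Subset.antisymm
    · intro x _; exact mem_univ x
    · intro x _
      rw [Finset.mem_sup]
      by_cases hx : x.val < k ∧ x.val ≠ a
      · exact ⟨{x}, by rw [mem_partsOf]; exact Or.inr ⟨x, mem_smalls.2 hx, rfl⟩,
          by simp⟩
      · exact ⟨bigB n k a, by rw [mem_partsOf]; exact Or.inl rfl,
          by rw [id, mem_bigB]; omega⟩
  bot_notMem := by
    rw [mem_partsOf]
    push_neg
    constructor
    · intro hb
      have : (⟨k, h⟩ : Fin n) ∈ bigB n k a := mem_bigB.2 (Or.inr le_rfl)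
      rw [← hb] at this; exact absurd this (by simp)
    · intro x _ hx
      have : x ∈ ({x} : Finset (Fin n)) := mem_singleton_self x
      rw [← hx] at this; exact absurd this (by simp)


lemma rgf_gP {n k a : ℕ} (h : k < n) (ha : a < k) (i : Fin n) :
    rgf (gP n k a h ha) i = if i.val < k then i.val + 1 else a + 1 := by
  unfold rgf
  have hparts : (gP n k a h ha).parts = partsOf n k a := rfl
  by_cases hi : i.val < k ∧ i.val ≠ a
  · have hb : blockOf (gP n k a h ha) i = {i} := by
      apply blockOf_eq
      · rw [hparts, mem_partsOf]; exact Or.inr ⟨i, mem_smalls.2 hi, rfl⟩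
      · exact mem_singleton_self i
    rw [hparts, hb, Finset.min_singleton, count_le h ha i hi.1, if_pos hi.1]
  · have hb : blockOf (gP n k a h ha) i = bigB n k a := by
      apply blockOf_eq
      · rw [hparts, mem_partsOf]; exact Or.inl rfl
      · rw [mem_bigB]; omega
    rw [hparts, hb, min_bigB h ha, count_le h ha ⟨a, ha.trans h⟩ ha]
    split_ifs with h2
    · have : i.val = a := by omega
      rw [this]
    · rfl

lemma card_not_lt (n k : ℕ) : (univ.filter (fun j : Fin n => ¬ j.val < k)).card = n - k := by
  have himg : (univ.filter (fun j : Fin n => ¬ j.val < k)).image Fin.val = Ico k n := by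
    ext m
    simp only [mem_image, mem_filter, mem_univ, true_and, mem_Ico]
    constructor
    · rintro ⟨x, hx, rfl⟩; exact ⟨by omega, x.isLt⟩
    · rintro ⟨hm1, hm2⟩; exact ⟨⟨m, hm2⟩, (by omega : ¬ m < k), rfl⟩
  rw [← Finset.card_image_of_injective _ Fin.val_injective, himg, Nat.card_Ico]

lemma lbStat_aux {n k a : ℕ} (h : k < n) (ha : a < k) (w : Fin n → ℕ)
    (hw : ∀ i, w i = if i.val < k then i.val + 1 else a + 1) :
    lbStat w = (n - k) * (k - 1 - a) := by
  unfold lbStat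
  have hterm : ∀ j : Fin n,
      (((univ.filter (fun i => i < j)).image w).filter (fun v => w j < v)).card
        = if j.val < k then 0 else (k - 1 - a) := by
    intro j
    by_cases hj : j.val < k
    · rw [if_pos hj, Finset.card_eq_zero, Finset.filter_eq_empty_iff]
      intro v hv
      obtain ⟨i, hi, rfl⟩ := mem_image.1 hv
      rw [mem_filter] at hi
      have hij : i.val < j.val := hi.2
      rw [hw i, hw j, if_pos hj, if_pos (by omega : i.val < k)]
      omega
    · rw [if_neg hj]
      have himg : (univ.filter (fun i => i < j)).image w = (range k).image (· + 1) := by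
        ext v
        simp only [mem_image, mem_filter, mem_univ, true_and, mem_range]
        constructor
        · rintro ⟨i, hij, rfl⟩
          rw [hw i]
          split_ifs with hik
          · exact ⟨i.val, hik, rfl⟩
          · exact ⟨a, ha, rfl⟩
        · rintro ⟨m, hm, rfl⟩
          refine ⟨⟨m, by omega⟩, ?_, ?_⟩
          · rw [Fin.lt_def]; show m < j.val; omega
          · rw [hw ⟨m, by omega⟩, if_pos (show m < k from hm)]
      rw [himg, hw j, if_neg hj, Finset.filter_image]
      have hio : (range k).filter (fun m => a + 1 < m + 1) = Ioo a k := by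
        ext m
        simp only [mem_filter, mem_range, mem_Ioo]
        omega
      rw [hio, Finset.card_image_of_injective _ (add_left_injective 1), Nat.card_Ioo]
      omega
  rw [Finset.sum_congr rfl (fun j _ => hterm j), Finset.sum_ite, Finset.sum_const,
    Finset.sum_const, smul_eq_mul, smul_eq_mul, mul_zero, zero_add, card_not_lt]


lemma inSame_iff {n : ℕ} (P : SP n) {B : Finset (Fin n)} {x y : Fin n}
    (hB : B ∈ P.parts) (hx : x ∈ B) : inSameBlock P x y ↔ y ∈ B := by
  constructor
  · rintro ⟨C, hC, hxC, hyC⟩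
    rwa [P.eq_of_mem_parts hB hC hx hxC]
  · intro hy; exact ⟨B, hB, hx, hy⟩

lemma avoids_gP {n k a : ℕ} (h : k < n) (ha : a < k) : avoids12_3 (gP n k a h ha) := by
  rintro ⟨x, y, z, hxy, hyz, ⟨B, hB, hxB, hyB⟩, hnot⟩
  apply hnot
  have hparts : (gP n k a h ha).parts = partsOf n k a := rfl
  rw [hparts, mem_partsOf] at hB
  rcases hB with rfl | ⟨w, hw, rfl⟩
  · -- x, y ∈ bigB, show x, z in same block
    refine ⟨bigB n k a, by rw [hparts, mem_partsOf]; exact Or.inl rfl, hxB, ?_⟩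
    rw [mem_bigB] at hxB hyB ⊢
    have h1 : x.val < y.val := hxy
    have h2 : y.val < z.val := hyz
    omega
  · -- singleton block: x = y contradiction with x < y
    rw [mem_singleton] at hxB hyB
    rw [hxB, ← hyB] at hxy
    exact absurd rfl (ne_of_lt hxy)

lemma card_partsOf {n k a : ℕ} (h : k < n) (ha : a < k) : (partsOf n k a).card = k := by
  have himg : (smalls n k a).image Fin.val = (range k).erase a := by
    ext m
    simp only [mem_image, mem_smalls, mem_erase, mem_range]
    constructor
    · rintro ⟨x, ⟨h1, h2⟩, rfl⟩; exact ⟨h2, h1⟩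
    · rintro ⟨h1, h2⟩; exact ⟨⟨m, by omega⟩, ⟨h2, h1⟩, rfl⟩
  have hsc : (smalls n k a).card = k - 1 := by
    rw [← Finset.card_image_of_injective _ Fin.val_injective, himg,
      Finset.card_erase_of_mem (mem_range.2 ha), Finset.card_range]
  rw [partsOf, Finset.card_insert_of_notMem (by
      intro hmem
      obtain ⟨x, _, hx⟩ := Finset.mem_image.1 hmem
      exact bigB_ne_singleton h ha x hx.symm),
    Finset.card_image_of_injective _ (fun x y hxy => by simpa using hxy), hsc]
  omega

lemma gP_inj {n k : ℕ} (h : k < n) {a b : ℕ} (ha : a < k) (hb : b < k)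
    (he : gP n k a h ha = gP n k b h hb) : a = b := by
  have hp : partsOf n k a = partsOf n k b := congrArg Finpartition.parts he
  have hmem : bigB n k a ∈ partsOf n k b := by
    rw [← hp, mem_partsOf]; exact Or.inl rfl
  rw [mem_partsOf] at hmem
  rcases hmem with hEq | ⟨x, _, hEq⟩
  · have hA : (⟨a, ha.trans h⟩ : Fin n) ∈ bigB n k b := hEq ▸ mem_bigB.2 (Or.inl rfl)
    rw [mem_bigB, Fin.val_mk] at hA
    omega
  · exact absurd hEq (bigB_ne_singleton h ha x)

lemma classify {n k : ℕ} (h : k < n) (P : SP n) (hcard : P.parts.card = k)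
    (hav : avoids12_3 P) : ∃ a, ∃ ha : a < k, P = gP n k a h ha := by
  classical
  have key : ∀ x y z : Fin n, x < y → y < z → inSameBlock P x y → inSameBlock P x z := by
    intro x y z hxy hyz hB
    by_contra hc
    exact hav ⟨x, y, z, hxy, hyz, hB, hc⟩
  obtain ⟨B₀, hB₀, hB₀2⟩ : ∃ B ∈ P.parts, 2 ≤ B.card := by
    by_contra hc
    push_neg at hc
    have hsum := P.sum_card_parts
    rw [Finset.card_fin] at hsum
    have hle : ∑ B ∈ P.parts, B.card ≤ ∑ B ∈ P.parts, 1 :=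
      Finset.sum_le_sum fun B hB => by have := hc B hB; omega
    rw [Finset.sum_const, smul_eq_mul, mul_one, hcard] at hle
    omega
  have hne : B₀.Nonempty := Finset.card_pos.1 (by omega)
  set a₀ := B₀.min' hne with ha₀def
  have ha₀ : a₀ ∈ B₀ := B₀.min'_mem hne
  have hene : (B₀.erase a₀).Nonempty :=
    Finset.card_pos.1 (by rw [Finset.card_erase_of_mem ha₀]; omega)
  set b₀ := (B₀.erase a₀).min' hene with hb₀def
  have hb₀ : b₀ ∈ B₀.erase a₀ := (B₀.erase a₀).min'_mem hene
  have hb₀B : b₀ ∈ B₀ := Finset.mem_of_mem_erase hb₀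
  have hab : a₀ < b₀ :=
    lt_of_le_of_ne (B₀.min'_le b₀ hb₀B) (Ne.symm (Finset.ne_of_mem_erase hb₀))
  have hlast : ∀ x : Fin n, x ≤ (⟨n-1, by omega⟩ : Fin n) := by
    intro x; rw [Fin.le_def]; show x.val ≤ n - 1; have := x.isLt; omega
  have htwo : ∀ B ∈ P.parts, 2 ≤ B.card → (⟨n-1, by omega⟩ : Fin n) ∈ B := by
    intro B hB h2
    have hne' : B.Nonempty := Finset.card_pos.1 (by omega)
    have ha' : B.min' hne' ∈ B := B.min'_mem hne'
    have hene' : (B.erase (B.min' hne')).Nonempty :=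
      Finset.card_pos.1 (by rw [Finset.card_erase_of_mem ha']; omega)
    set b' := (B.erase (B.min' hne')).min' hene' with hb'def
    have hb' : b' ∈ B.erase (B.min' hne') := (B.erase (B.min' hne')).min'_mem hene'
    have hb'B : b' ∈ B := Finset.mem_of_mem_erase hb'
    have hab' : B.min' hne' < b' :=
      lt_of_le_of_ne (B.min'_le b' hb'B) (Ne.symm (Finset.ne_of_mem_erase hb'))
    rcases eq_or_lt_of_le (hlast b') with hEq | hLt
    · rw [← hEq]; exact hb'B
    · exact (inSame_iff P hB ha').1
        (key _ b' _ hab' hLt ((inSame_iff P hB ha').2 hb'B))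
  have hlastB₀ : (⟨n-1, by omega⟩ : Fin n) ∈ B₀ := htwo B₀ hB₀ hB₀2
  have hF : ∀ x : Fin n, b₀ ≤ x → x ∈ B₀ := by
    intro x hx
    rcases eq_or_lt_of_le hx with hEq | hLt
    · rw [← hEq]; exact hb₀B
    · exact (inSame_iff P hB₀ ha₀).1
        (key a₀ b₀ x hab hLt ((inSame_iff P hB₀ ha₀).2 hb₀B))
  have hG : ∀ x ∈ B₀, x = a₀ ∨ b₀ ≤ x := by
    intro x hx
    by_cases hxa : x = a₀
    · exact Or.inl hxa
    · exact Or.inr ((B₀.erase a₀).min'_le x (Finset.mem_erase.2 ⟨hxa, hx⟩))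
  have hD : ∀ B ∈ P.parts, B ≠ B₀ → ∃ x, B = {x} ∧ x ∉ B₀ := by
    intro B hB hneB
    have hcard1 : B.card = 1 := by
      by_contra hc
      have h1 : 1 ≤ B.card := Finset.card_pos.2 (P.nonempty_of_mem_parts hB)
      have h2 : 2 ≤ B.card := by omega
      exact hneB (P.eq_of_mem_parts hB hB₀ (htwo B hB h2) hlastB₀)
    obtain ⟨x, rfl⟩ := Finset.card_eq_one.1 hcard1
    refine ⟨x, rfl, fun hxB₀ => ?_⟩
    exact hneB (P.eq_of_mem_parts hB hB₀ (Finset.mem_singleton_self x) hxB₀)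
  have hpartseq : P.parts = insert B₀ ((univ.filter (fun x => x ∉ B₀)).image ({·})) := by
    ext B
    simp only [Finset.mem_insert, Finset.mem_image, Finset.mem_filter, mem_univ, true_and]
    constructor
    · intro hB
      by_cases hneB : B = B₀
      · exact Or.inl hneB
      · obtain ⟨x, hx1, hx2⟩ := hD B hB hneB
        exact Or.inr ⟨x, hx2, hx1.symm⟩
    · rintro (rfl | ⟨x, hx, rfl⟩)
      · exact hB₀
      · obtain ⟨B', hB', hxB'⟩ := P.exists_mem (mem_univ x)
        have hneB' : B' ≠ B₀ := fun hEq => hx (hEq ▸ hxB')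
        obtain ⟨y, rfl, _⟩ := hD B' hB' hneB'
        rw [Finset.mem_singleton] at hxB'
        rwa [hxB']
  -- compute b₀.val = k
  have hB₀eq : B₀ = insert a₀ (univ.filter (fun x : Fin n => ¬ x.val < b₀.val)) := by
    ext x
    simp only [Finset.mem_insert, Finset.mem_filter, mem_univ, true_and, not_lt]
    constructor
    · intro hx
      rcases hG x hx with hEq | hle
      · exact Or.inl hEq
      · exact Or.inr hle
    · rintro (rfl | hle)
      · exact ha₀
      · exact hF x hle
  have hB₀card : B₀.card = 1 + (n - b₀.val) := by
    rw [hB₀eq, Finset.card_insert_of_notMem (by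
        simp only [Finset.mem_filter, mem_univ, true_and, not_lt, not_le]
        exact hab), card_not_lt]
    omega
  have hcompl : (univ.filter (fun x : Fin n => x ∉ B₀)).card = n - B₀.card := by
    rw [Finset.filter_not, Finset.filter_mem_eq_inter, Finset.univ_inter,
      Finset.card_sdiff_of_subset (Finset.subset_univ _), Finset.card_fin]
  have hk2 : k = 1 + (n - B₀.card) := by
    rw [← hcard, hpartseq, Finset.card_insert_of_notMem (by
        intro hmem
        obtain ⟨x, hx, hxeq⟩ := Finset.mem_image.1 hmem
        rw [Finset.mem_filter] at hx
        exact hx.2 (hxeq ▸ Finset.mem_singleton_self x)),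
      Finset.card_image_of_injective _ (fun x y hxy => by simpa using hxy), hcompl]
    omega
  have hb₀n : b₀.val < n := b₀.isLt
  have hb₀1 : 1 ≤ b₀.val := by
    have : a₀.val < b₀.val := hab
    omega
  have hbk : b₀.val = k := by omega
  have ha₀k : a₀.val < k := by
    have : a₀.val < b₀.val := hab
    omega
  refine ⟨a₀.val, ha₀k, ?_⟩
  apply Finpartition.ext
  show P.parts = partsOf n k a₀.val
  have h1 : B₀ = bigB n k a₀.val := by
    ext x
    rw [mem_bigB, hB₀eq]
    simp only [Finset.mem_insert, Finset.mem_filter, mem_univ, true_and, not_lt]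
    rw [Fin.ext_iff]
    omega
  have h2 : univ.filter (fun x : Fin n => x ∉ B₀) = smalls n k a₀.val := by
    ext x
    simp only [Finset.mem_filter, mem_univ, true_and, mem_smalls, hB₀eq,
      Finset.mem_insert, not_or]
    simp only [Finset.mem_filter, mem_univ, true_and, not_lt, not_le, Fin.ext_iff, Fin.lt_def, hbk]
    omega
  rw [hpartseq, h2, h1, partsOf]

/-- For `n > k`, `LB_{n,k}(12/3, q) = Σ_{i=1}^{k} q^{(n-k)(k-i)}`;
in particular its degree is `(n-k)(k-1)`. -/
theorem stmt13 (n k : ℕ) (h : k < n) :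
    genPoly n k avoids12_3 lbStat =
      ∑ i ∈ Finset.range k, (X : Polynomial ℕ) ^ ((n - k) * i) ∧
    (genPoly n k avoids12_3 lbStat).natDegree = (n - k) * (k - 1) := by
  classical
  have hsum : genPoly n k avoids12_3 lbStat
      = ∑ i ∈ Finset.range k, (X : Polynomial ℕ) ^ ((n - k) * i) := by
    unfold genPoly
    have hS : (Finset.univ.filter (fun P : SP n => P.parts.card = k ∧ avoids12_3 P))
        = Finset.image (fun p : Fin k => gP n k p.val h p.isLt) Finset.univ := by
      ext P
      simp only [Finset.mem_filter, Finset.mem_univ, true_and, Finset.mem_image]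
      constructor
      · rintro ⟨hcard, hav⟩
        obtain ⟨a, ha, rfl⟩ := classify h P hcard hav
        exact ⟨⟨a, ha⟩, rfl⟩
      · rintro ⟨p, rfl⟩
        exact ⟨card_partsOf h p.isLt, avoids_gP h p.isLt⟩
    rw [hS, Finset.sum_image (by
      intro x _ y _ he
      exact Fin.ext (gP_inj h x.isLt y.isLt he))]
    have hterm : ∀ p : Fin k, lbStat (rgf (gP n k p.val h p.isLt)) = (n-k)*(k-1-p.val) :=
      fun p => lbStat_aux h p.isLt _ (rgf_gP h p.isLt)
    calc ∑ p : Fin k, (X : Polynomial ℕ) ^ lbStat (rgf (gP n k p.val h p.isLt))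
        = ∑ p : Fin k, (X : Polynomial ℕ) ^ ((n-k)*(k-1-(p : ℕ))) :=
          Finset.sum_congr rfl fun p _ => by rw [hterm p]
      _ = ∑ i ∈ Finset.range k, (X : Polynomial ℕ) ^ ((n-k)*(k-1-i)) :=
          Fin.sum_univ_eq_sum_range (fun m => (X : Polynomial ℕ) ^ ((n-k)*(k-1-m))) k
      _ = ∑ i ∈ Finset.range k, (X : Polynomial ℕ) ^ ((n-k)*i) :=
          Finset.sum_range_reflect (fun i => (X : Polynomial ℕ) ^ ((n-k)*i)) k
  refine ⟨hsum, ?_⟩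
  rw [hsum]
  rcases Nat.eq_zero_or_pos k with rfl | hk
  · simp
  apply le_antisymm
  · refine (Polynomial.natDegree_sum_le _ _).trans ?_
    rw [Finset.fold_max_le]
    refine ⟨Nat.zero_le _, ?_⟩
    intro i hi
    simp only [Function.comp]
    rw [Polynomial.natDegree_X_pow]
    exact Nat.mul_le_mul_left _ (by rw [Finset.mem_range] at hi; omega)
  · apply Polynomial.le_natDegree_of_ne_zero
    rw [Polynomial.finset_sum_coeff]
    have h1 : ((X : Polynomial ℕ) ^ ((n-k)*(k-1))).coeff ((n-k)*(k-1)) = 1 := by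
      rw [Polynomial.coeff_X_pow, if_pos rfl]
    have h2 := Finset.single_le_sum
      (f := fun i => ((X : Polynomial ℕ) ^ ((n-k)*i)).coeff ((n-k)*(k-1)))
      (fun i _ => Nat.zero_le _) (Finset.mem_range.2 (by omega : k - 1 < k))
    rw [h1] at h2
    omega
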